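/- Let T and S be trees and μ a model of T in S (i.e., a witness that T is a minor of S). If v is a vertex of T with degree greater than 2, then the branch set μ(v) contains a vertex of S of degree greater than 2. -/

import Mathlib

open SimpleGraph

/-- A ray in a graph: a one-way infinite path. -/
def IsRay {V : Type*} (G : SimpleGraph V) (f : ℕ → V) : Prop :=
  Function.Injective f ∧ ∀ n, G.Adj (f n) (f (n + 1))

/-- The degree of a vertex, as an extended natural number. -/
noncomputable def eDeg {V : Type*} (G : SimpleGraph V) (v : V) : ℕ∞ :=
  (G.neighborSet v).encard

/-- A ray is eventually bare if from some index on all its vertices have degree 2. -/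
def EventuallyBare {V : Type*} (G : SimpleGraph V) (f : ℕ → V) : Prop :=
  ∃ M : ℕ, ∀ n ≥ M, eDeg G (f n) = 2

/-- A tree is small if every ray in it is eventually bare. -/
def IsSmall {V : Type*} (G : SimpleGraph V) : Prop :=
  ∀ f : ℕ → V, IsRay G f → EventuallyBare G f

/-- A minor model of `T` in `S`: pairwise disjoint nonempty connected branch sets,
every edge of `T` witnessed by an edge of `S` between the corresponding branch sets. -/
structure IsModel {V W : Type*} (T : SimpleGraph V) (S : SimpleGraph W)
    (μ : V → Set W) : Prop where
  nonempty : ∀ v, (μ v).Nonempty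
  connected : ∀ v, (S.induce (μ v)).Connected
  disjoint : ∀ v w, v ≠ w → Disjoint (μ v) (μ w)
  edge : ∀ v w, T.Adj v w → ∃ a ∈ μ v, ∃ b ∈ μ w, S.Adj a b

/-- `T` is a minor of `S`. -/
def IsMinorOf {V W : Type*} (T : SimpleGraph V) (S : SimpleGraph W) : Prop :=
  ∃ μ : V → Set W, IsModel T S μ

/-- Tree order relative to a root: `v` lies on the (unique) path from `r` to `w`. -/
def treeLE {V : Type*} (G : SimpleGraph V) (r v w : V) : Prop :=
  v = w ∨ ∃ p : G.Walk r w, p.IsPath ∧ v ∈ p.support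

/-- Closure of a vertex set: the set together with all vertices on paths joining its members. -/
def treeClosure {V : Type*} (G : SimpleGraph V) (A : Set V) : Set V :=
  A ∪ {x | ∃ a ∈ A, ∃ b ∈ A, ∃ p : G.Walk a b, p.IsPath ∧ x ∈ p.support}



lemma three_of_two_lt_encard {α : Type*} {s : Set α} (h : 2 < s.encard) :
    ∃ a ∈ s, ∃ b ∈ s, ∃ c ∈ s, a ≠ b ∧ a ≠ c ∧ b ≠ c := by
  have h1 : (1 : ℕ∞) < s.encard := lt_trans (by norm_num) h
  obtain ⟨a, b, ha, hb, hab⟩ := Set.one_lt_encard_iff.1 h1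
  by_contra hc
  push_neg at hc
  have hsub : s ⊆ {a, b} := by
    intro c hcs
    by_contra hcc
    simp only [Set.mem_insert_iff, Set.mem_singleton_iff, not_or] at hcc
    exact hcc.2 (hc a ha b hb c hcs hab (fun h' => hcc.1 h'.symm)).symm
  have := (Set.encard_mono hsub).trans_eq (Set.encard_pair hab)
  exact absurd h (not_lt.mpr this)

lemma coe_acyclic {W : Type*} {S : SimpleGraph W} (hS : S.IsAcyclic) (H : S.Subgraph) :
    H.coe.IsAcyclic := fun _ c hc => hS (c.map H.hom) (hc.map Subgraph.hom_injective)

lemma encard_neighbor_coe_le {W : Type*} {S : SimpleGraph W} (H : S.Subgraph) (w : H.verts) :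
    (H.coe.neighborSet w).encard ≤ (S.neighborSet w.val).encard := by
  have hsub : (Subtype.val '' (H.coe.neighborSet w)) ⊆ S.neighborSet w.val := by
    rintro x ⟨y, hy, rfl⟩; exact H.adj_sub hy
  calc (H.coe.neighborSet w).encard
      = (Subtype.val '' (H.coe.neighborSet w)).encard :=
        (Subtype.val_injective.encard_image _).symm
    _ ≤ _ := Set.encard_mono hsub

theorem stmt1' {V W : Type*} (T : SimpleGraph V) (S : SimpleGraph W)
    (hT : T.IsTree) (hS : S.IsTree) (μ : V → Set W) (hμ : IsModel T S μ)
    (v : V) (hv : 2 < (T.neighborSet v).encard) :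
    ∃ w ∈ μ v, 2 < (S.neighborSet w).encard := by
  classical
  by_contra hcon
  push_neg at hcon
  obtain ⟨v1, hv1, v2, hv2, v3, hv3, h12, h13, h23⟩ := three_of_two_lt_encard hv
  obtain ⟨a1, ha1, b1, hb1, hadj1⟩ := hμ.edge v v1 hv1
  obtain ⟨a2, ha2, b2, hb2, hadj2⟩ := hμ.edge v v2 hv2
  obtain ⟨a3, ha3, b3, hb3, hadj3⟩ := hμ.edge v v3 hv3
  have hvne1 : v ≠ v1 := T.ne_of_adj hv1
  have hvne2 : v ≠ v2 := T.ne_of_adj hv2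
  have hvne3 : v ≠ v3 := T.ne_of_adj hv3
  have hbv1 : b1 ∉ μ v := fun h => Set.disjoint_left.mp (hμ.disjoint v v1 hvne1) h hb1
  have hbv2 : b2 ∉ μ v := fun h => Set.disjoint_left.mp (hμ.disjoint v v2 hvne2) h hb2
  have hbv3 : b3 ∉ μ v := fun h => Set.disjoint_left.mp (hμ.disjoint v v3 hvne3) h hb3
  have hb12 : b1 ≠ b2 := fun h =>
    Set.disjoint_left.mp (hμ.disjoint v1 v2 h12) hb1 (h ▸ hb2)
  have hb13 : b1 ≠ b3 := fun h =>
    Set.disjoint_left.mp (hμ.disjoint v1 v3 h13) hb1 (h ▸ hb3)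
  have hb23 : b2 ≠ b3 := fun h =>
    Set.disjoint_left.mp (hμ.disjoint v2 v3 h23) hb2 (h ▸ hb3)
  -- walks inside μ v
  obtain ⟨p12⟩ := (hμ.connected v).preconnected ⟨a1, ha1⟩ ⟨a2, ha2⟩
  obtain ⟨p13⟩ := (hμ.connected v).preconnected ⟨a1, ha1⟩ ⟨a3, ha3⟩
  let f := (SimpleGraph.Embedding.induce (G := S) (μ v)).toHom
  let q12 : S.Walk a1 a2 := p12.map f
  let q13 : S.Walk a1 a3 := p13.map f
  let c : S.Walk a2 a3 := q12.reverse.append q13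
  have hsupp : ∀ x ∈ c.support, x ∈ μ v := by
    intro x hx
    rw [Walk.mem_support_append_iff] at hx
    rcases hx with hx | hx
    · rw [Walk.support_reverse, List.mem_reverse] at hx
      replace hx : x ∈ (p12.map f).support := hx
      rw [Walk.support_map, List.mem_map] at hx
      obtain ⟨y, _, rfl⟩ := hx
      exact y.2
    · replace hx : x ∈ (p13.map f).support := hx
      rw [Walk.support_map, List.mem_map] at hx
      obtain ⟨y, _, rfl⟩ := hx
      exact y.2
  have ha1s : a1 ∈ c.support :=
    (Walk.mem_support_append_iff _ _).mpr (Or.inr (Walk.start_mem_support q13))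
  have ha2s : a2 ∈ c.support := c.start_mem_support
  have ha3s : a3 ∈ c.support := c.end_mem_support
  set H : S.Subgraph :=
    ((c.toSubgraph ⊔ S.subgraphOfAdj hadj1) ⊔ S.subgraphOfAdj hadj2) ⊔ S.subgraphOfAdj hadj3
    with hHdef
  have hHconn : H.Connected := by
    refine Subgraph.connected_sup (Subgraph.connected_sup (Subgraph.connected_sup
      c.toSubgraph_connected.preconnected
      (SimpleGraph.Subgraph.subgraphOfAdj_connected hadj1).preconnected
      ⟨a1, ?_⟩).preconnected (SimpleGraph.Subgraph.subgraphOfAdj_connected hadj2).preconnected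
      ⟨a2, ?_⟩).preconnected (SimpleGraph.Subgraph.subgraphOfAdj_connected hadj3).preconnected
      ⟨a3, ?_⟩
    · simp [Walk.mem_verts_toSubgraph, ha1s]
    · simp [Walk.mem_verts_toSubgraph, ha2s]
    · simp [Walk.mem_verts_toSubgraph, ha3s]
  have hb1v : b1 ∈ H.verts := by simp [hHdef]
  have hb2v : b2 ∈ H.verts := by simp [hHdef]
  have hb3v : b3 ∈ H.verts := by simp [hHdef]
  have hfin : H.verts.Finite := by
    simp only [hHdef, Subgraph.verts_sup, subgraphOfAdj_verts, Walk.verts_toSubgraph]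
    exact (((c.support.finite_toSet).union
      ((Set.finite_singleton _).insert _)).union
      ((Set.finite_singleton _).insert _)).union
      ((Set.finite_singleton _).insert _)
  haveI : Fintype H.verts := hfin.fintype
  haveI : DecidableEq H.verts := Classical.decEq _
  haveI : DecidableRel H.coe.Adj := Classical.decRel _
  have htree : H.coe.IsTree := ⟨Subgraph.connected_iff'.mp hHconn, coe_acyclic hS.IsAcyclic H⟩
  -- vertices of H are either in μ v or one of the bᵢ
  have hvertchar : ∀ x ∈ H.verts, x ∈ μ v ∨ x = b1 ∨ x = b2 ∨ x = b3 := by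
    intro x hx
    simp only [hHdef, Subgraph.verts_sup, subgraphOfAdj_verts, Walk.verts_toSubgraph,
      Set.mem_union, Set.mem_setOf_eq, Set.mem_insert_iff, Set.mem_singleton_iff] at hx
    rcases hx with (((hx | hx) | hx) | hx)
    · exact Or.inl (hsupp x hx)
    · rcases hx with rfl | rfl
      exacts [Or.inl ha1, Or.inr (Or.inl rfl)]
    · rcases hx with rfl | rfl
      exacts [Or.inl ha2, Or.inr (Or.inr (Or.inl rfl))]
    · rcases hx with rfl | rfl
      exacts [Or.inl ha3, Or.inr (Or.inr (Or.inr rfl))]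
  -- adjacency to bᵢ in H forces the neighbor aᵢ
  have key : ∀ {b a j : W} (h : S.Adj a b), b ∉ μ v → a ∈ μ v →
      (S.subgraphOfAdj h).Adj b j → j = a := by
    intro b a j h hbm ham hj
    simp only [subgraphOfAdj_adj] at hj
    rw [Sym2.eq_iff] at hj
    rcases hj with ⟨rfl, rfl⟩ | ⟨rfl, -⟩
    · exact absurd ham hbm
    · rfl
  have ha1H : a1 ∈ H.verts := by simp [hHdef]
  have ha2H : a2 ∈ H.verts := by simp [hHdef]
  have ha3H : a3 ∈ H.verts := by simp [hHdef]
  let b1' : H.verts := ⟨b1, hb1v⟩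
  let b2' : H.verts := ⟨b2, hb2v⟩
  let b3' : H.verts := ⟨b3, hb3v⟩
  have key2 : ∀ {b a x y : W} (h : S.Adj a b), a ∈ μ v → x ∉ μ v → x ≠ b →
      ¬ (S.subgraphOfAdj h).Adj x y := by
    intro b a x y h ham hxm hxb hadjx
    simp only [subgraphOfAdj_adj, Sym2.eq_iff] at hadjx
    rcases hadjx with ⟨h1, h2⟩ | ⟨h1, h2⟩
    · exact hxm (h1 ▸ ham)
    · exact hxb h2.symm
  have adj_b : ∀ {b : W}, b ∉ μ v → ∀ {x : W}, H.Adj b x →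
      ((S.subgraphOfAdj hadj1).Adj b x ∨ (S.subgraphOfAdj hadj2).Adj b x ∨
        (S.subgraphOfAdj hadj3).Adj b x) := by
    intro b hb x hx
    rw [hHdef] at hx
    simp only [Subgraph.sup_adj] at hx
    rcases hx with ((hx | hx) | hx) | hx
    · exact absurd (hsupp b ((Walk.mem_verts_toSubgraph c).mp (c.toSubgraph.edge_vert hx))) hb
    · exact Or.inl hx
    · exact Or.inr (Or.inl hx)
    · exact Or.inr (Or.inr hx)
  -- degree bounds for the bᵢ
  have hd1 : H.coe.degree b1' ≤ 1 := by
    have hsub : H.coe.neighborFinset b1' ⊆ {⟨a1, ha1H⟩} := by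
      intro x hx
      rw [SimpleGraph.mem_neighborFinset] at hx
      have hx' : H.Adj b1 x.val := hx
      simp only [Finset.mem_singleton]
      rcases adj_b hbv1 hx' with h | h | h
      · exact Subtype.ext (key hadj1 hbv1 ha1 h)
      · exact absurd h (key2 hadj2 ha2 hbv1 hb12)
      · exact absurd h (key2 hadj3 ha3 hbv1 hb13)
    simpa using Finset.card_le_card hsub
  have hd2 : H.coe.degree b2' ≤ 1 := by
    have hsub : H.coe.neighborFinset b2' ⊆ {⟨a2, ha2H⟩} := by
      intro x hx
      rw [SimpleGraph.mem_neighborFinset] at hx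
      have hx' : H.Adj b2 x.val := hx
      simp only [Finset.mem_singleton]
      rcases adj_b hbv2 hx' with h | h | h
      · exact absurd h (key2 hadj1 ha1 hbv2 hb12.symm)
      · exact Subtype.ext (key hadj2 hbv2 ha2 h)
      · exact absurd h (key2 hadj3 ha3 hbv2 hb23)
    simpa using Finset.card_le_card hsub
  have hd3 : H.coe.degree b3' ≤ 1 := by
    have hsub : H.coe.neighborFinset b3' ⊆ {⟨a3, ha3H⟩} := by
      intro x hx
      rw [SimpleGraph.mem_neighborFinset] at hx
      have hx' : H.Adj b3 x.val := hx
      simp only [Finset.mem_singleton]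
      rcases adj_b hbv3 hx' with h | h | h
      · exact absurd h (key2 hadj1 ha1 hbv3 hb13.symm)
      · exact absurd h (key2 hadj2 ha2 hbv3 hb23.symm)
      · exact Subtype.ext (key hadj3 hbv3 ha3 h)
    simpa using Finset.card_le_card hsub
  -- degree bound for vertices in μ v
  have hdeg2 : ∀ x : H.verts, x.val ∈ μ v → H.coe.degree x ≤ 2 := by
    intro x hx
    have h1 : (H.coe.neighborSet x).encard ≤ 2 :=
      le_trans (encard_neighbor_coe_le H x) (hcon x.val hx)
    have h2 : (H.coe.neighborSet x).encard = ((H.coe.neighborFinset x).card : ℕ∞) := by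
      rw [SimpleGraph.neighborFinset_def, Set.encard_eq_coe_toFinset_card]
    rw [h2] at h1
    rw [← SimpleGraph.card_neighborFinset_eq_degree]
    exact_mod_cast h1
  -- sum up
  let B : Finset H.verts := {b1', b2', b3'}
  have hb12' : b1' ≠ b2' := fun h => hb12 (congrArg Subtype.val h)
  have hb13' : b1' ≠ b3' := fun h => hb13 (congrArg Subtype.val h)
  have hb23' : b2' ≠ b3' := fun h => hb23 (congrArg Subtype.val h)
  have hcardB : B.card = 3 := by
    rw [show B = {b1', b2', b3'} from rfl, Finset.card_insert_of_notMem,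
      Finset.card_insert_of_notMem, Finset.card_singleton]
    · simp [hb23']
    · simp [hb12', hb13']
  have hsumB : ∑ x ∈ B, H.coe.degree x ≤ 3 := by
    calc ∑ x ∈ B, H.coe.degree x ≤ ∑ _x ∈ B, 1 := by
          refine Finset.sum_le_sum ?_
          intro x hx
          simp only [show B = {b1', b2', b3'} from rfl, Finset.mem_insert,
            Finset.mem_singleton] at hx
          rcases hx with rfl | rfl | rfl
          exacts [hd1, hd2, hd3]
      _ = 3 := by rw [Finset.sum_const, hcardB, smul_eq_mul, mul_one]
  have hsumR : ∑ x ∈ Finset.univ \ B, H.coe.degree x ≤ (Finset.univ \ B).card * 2 := by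
    refine Finset.sum_le_card_nsmul _ _ 2 ?_
    intro x hx
    rw [Finset.mem_sdiff] at hx
    refine hdeg2 x ?_
    rcases hvertchar x.val x.2 with h | h | h | h
    · exact h
    · exact absurd (by simp [show B = {b1', b2', b3'} from rfl, Subtype.ext_iff, h, b1', b2', b3']) hx.2
    · exact absurd (by simp [show B = {b1', b2', b3'} from rfl, Subtype.ext_iff, h, b1', b2', b3']) hx.2
    · exact absurd (by simp [show B = {b1', b2', b3'} from rfl, Subtype.ext_iff, h, b1', b2', b3']) hx.2
  have htotal : ∑ x : H.verts, H.coe.degree x + 2 = 2 * Fintype.card H.verts := by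
    have h1 := H.coe.sum_degrees_eq_twice_card_edges
    have h2 := htree.card_edgeFinset
    have h3 : ∑ x : H.verts, H.coe.degree x
        = ∑ x : H.verts, @degree _ H.coe x (H.coe.neighborSetFintype x) :=
      Finset.sum_congr rfl (fun x _ => by congr!)
    rw [h3, h1]
    omega
  have hsplit : ∑ x ∈ Finset.univ \ B, H.coe.degree x + ∑ x ∈ B, H.coe.degree x
      = ∑ x, H.coe.degree x := Finset.sum_sdiff (Finset.subset_univ B)
  have hNB : 3 ≤ Fintype.card H.verts := by
    rw [← hcardB, ← Finset.card_univ]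
    exact Finset.card_le_card (Finset.subset_univ B)
  have hcardsd : (Finset.univ \ B).card = Fintype.card H.verts - 3 := by
    rw [Finset.card_sdiff_of_subset (Finset.subset_univ B), hcardB, Finset.card_univ]
  have hX : ∑ x ∈ Finset.univ \ B, H.coe.degree x + ∑ x ∈ B, H.coe.degree x
      = ∑ x : H.verts, H.coe.degree x := hsplit
  omega

theorem stmt1 {V W : Type*} (T : SimpleGraph V) (S : SimpleGraph W)
    (hT : T.IsTree) (hS : S.IsTree) (μ : V → Set W) (hμ : IsModel T S μ)
    (v : V) (hv : 2 < eDeg T v) : ∃ w ∈ μ v, 2 < eDeg S w := by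
  unfold eDeg at hv ⊢
  exact stmt1' T S hT hS μ hμ v hv
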